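/- For every integer n ≥ 3, the quantity s_n = (∑_{k=1}^{n−2} 1/k) + 13/(12(n−1)) + 5/(12n) − ln n satisfies s_n − γ > 1/(12n³) + 11/(120n⁴). -/

import Mathlib

open Real Filter Finset Topology

lemma log_lb (x : ℝ) (hx : 3 ≤ x) :
    1/x - 1/(2*x^2) + 1/(3*x^3) - 1/(4*x^4) + 1/(5*x^5) - 1/(6*x^6) + 1/(7*x^7)
      - 1/(x^7*(x-1)) ≤ Real.log (1 + 1/x) := by
  have hx0 : (0:ℝ) < x := by linarith
  have h1 : |(-(1/x))| < 1 := by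
    rw [abs_neg, abs_of_pos (by positivity)]
    rw [div_lt_one hx0]; linarith
  have h := Real.abs_log_sub_add_sum_range_le h1 7
  have hsum : ∑ i ∈ Finset.range 7, (-(1/x)) ^ (i+1) / (i+1)
      = -(1/x) + 1/(2*x^2) - 1/(3*x^3) + 1/(4*x^4) - 1/(5*x^5) + 1/(6*x^6) - 1/(7*x^7) := by
    simp [Finset.sum_range_succ]
    ring
  have hlog : Real.log (1 - (-(1/x))) = Real.log (1 + 1/x) := by ring_nf
  rw [hsum, hlog] at h
  have habs : |(-(1/x))| = 1/x := by
    rw [abs_neg, abs_of_pos (by positivity)]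
  rw [habs] at h
  have hxm1 : (0:ℝ) < x - 1 := by linarith
  have hb : (1/x)^(7+1) / (1 - 1/x) = 1/(x^7*(x-1)) := by
    have h2 : (0:ℝ) < 1 - 1/x := by rw [sub_pos, div_lt_one hx0]; linarith
    rw [div_eq_div_iff h2.ne' (by positivity)]
    field_simp
    ring_nf
    rw [← mul_pow, mul_inv_cancel₀ hx0.ne', one_pow]
  rw [hb] at h
  have := abs_le.mp h
  linarith [this.1]

lemma key (x : ℝ) (hx : 3 ≤ x) :
    2/(3*x) + 5/(12*(x+1)) - 1/(12*(x-1))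
      + (1/(12*x^3) + 11/(120*x^4)) - (1/(12*(x+1)^3) + 11/(120*(x+1)^4))
      < Real.log (1 + 1/x) := by
  have hx0 : (0:ℝ) < x := by linarith
  have hxm1 : (0:ℝ) < x - 1 := by linarith
  have hxp1 : (0:ℝ) < x + 1 := by linarith
  have hnum : (0:ℝ) < 350*x^6 + 400*x^5 - 445*x^4 - 3057*x^3 - 5028*x^2 - 3580*x - 960 := by
    nlinarith [pow_pos (show (0:ℝ) < x - 3 + 1 by linarith) 1, sq_nonneg (x-3),
      pow_nonneg (show (0:ℝ) ≤ x - 3 by linarith) 3,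
      pow_nonneg (show (0:ℝ) ≤ x - 3 by linarith) 4,
      pow_nonneg (show (0:ℝ) ≤ x - 3 by linarith) 5,
      pow_nonneg (show (0:ℝ) ≤ x - 3 by linarith) 6]
  have hid : (1/x - 1/(2*x^2) + 1/(3*x^3) - 1/(4*x^4) + 1/(5*x^5) - 1/(6*x^6) + 1/(7*x^7)
      - 1/(x^7*(x-1)))
      - (2/(3*x) + 5/(12*(x+1)) - 1/(12*(x-1))
      + (1/(12*x^3) + 11/(120*x^4)) - (1/(12*(x+1)^3) + 11/(120*(x+1)^4)))
      = (350*x^6 + 400*x^5 - 445*x^4 - 3057*x^3 - 5028*x^2 - 3580*x - 960)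
        / (840 * x^7 * (x-1) * (x+1)^4) := by
    field_simp
    ring
  have hpos : (0:ℝ) < (350*x^6 + 400*x^5 - 445*x^4 - 3057*x^3 - 5028*x^2 - 3580*x - 960)
        / (840 * x^7 * (x-1) * (x+1)^4) := by positivity
  linarith [log_lb x hx, hid ▸ hpos]

noncomputable def s (n : ℕ) : ℝ :=
  (∑ k ∈ Finset.Icc 1 (n - 2), (1 : ℝ) / k) + 13 / (12 * ((n : ℝ) - 1)) + 5 / (12 * n)
    - Real.log n

noncomputable def aa (n : ℕ) : ℝ :=
  s n - (1 / (12 * (n : ℝ) ^ 3) + 11 / (120 * (n : ℝ) ^ 4))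

set_option maxHeartbeats 1000000 in
lemma step (n : ℕ) (hn : 3 ≤ n) : aa (n + 1) < aa n := by
  obtain ⟨m, rfl⟩ : ∃ m, n = m + 3 := ⟨n - 3, by omega⟩
  have hm0 : (0:ℝ) ≤ (m:ℝ) := Nat.cast_nonneg m
  have hx : (3:ℝ) ≤ (m:ℝ) + 3 := by linarith
  have hkey := key ((m:ℝ) + 3) hx
  have hlog : Real.log (1 + 1/((m:ℝ)+3))
      = Real.log ((m:ℝ)+4) - Real.log ((m:ℝ)+3) := by
    rw [← Real.log_div (by positivity) (by positivity)]
    congr 1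
    field_simp
    ring
  have hsum : ∑ k ∈ Finset.Icc 1 (m+2), (1:ℝ)/k
      = (∑ k ∈ Finset.Icc 1 (m+1), (1:ℝ)/k) + 1/((m:ℝ)+2) := by
    rw [Finset.sum_Icc_succ_top (by omega : 1 ≤ m+2)]
    congr 1
    push_cast
    ring
  have hgoal : aa (m+3) - aa (m+3+1)
      = Real.log (1 + 1/((m:ℝ)+3))
        - (2/(3*((m:ℝ)+3)) + 5/(12*(((m:ℝ)+3)+1)) - 1/(12*(((m:ℝ)+3)-1))
          + (1/(12*((m:ℝ)+3)^3) + 11/(120*((m:ℝ)+3)^4))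
          - (1/(12*(((m:ℝ)+3)+1)^3) + 11/(120*(((m:ℝ)+3)+1)^4))) := by
    have e1 : m + 3 - 2 = m + 1 := by omega
    have e2 : m + 3 + 1 - 2 = m + 2 := by omega
    simp only [aa, s, e1, e2, hlog]
    rw [hsum]
    push_cast
    rw [show ((m:ℝ)+3-1) = (m:ℝ)+2 from by ring,
       show ((m:ℝ)+3+1) = (m:ℝ)+4 from by ring]
    rw [show ((m:ℝ)+4-1) = (m:ℝ)+3 from by ring]
    have h2 : ((m:ℝ)+2) ≠ 0 := by positivity
    have h3 : ((m:ℝ)+3) ≠ 0 := by positivity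
    have h4 : ((m:ℝ)+4) ≠ 0 := by positivity
    field_simp
    ring
  linarith [hgoal, hkey]

lemma aa_eq (n : ℕ) (hn : 3 ≤ n) :
    aa n = ((harmonic n : ℝ) - Real.log n)
      + (1/(12*((n:ℝ)-1)) - 7/(12*(n:ℝ))
         - (1 / (12 * (n : ℝ) ^ 3) + 11 / (120 * (n : ℝ) ^ 4))) := by
  obtain ⟨m, rfl⟩ : ∃ m, n = m + 3 := ⟨n - 3, by omega⟩
  have hicc : ∑ k ∈ Finset.Icc 1 (m+1), (1:ℝ)/k = (harmonic (m+1) : ℝ) := by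
    rw [harmonic_eq_sum_Icc]
    push_cast
    simp [one_div]
  have hharm : (harmonic (m+3) : ℝ)
      = (harmonic (m+1) : ℝ) + 1/((m:ℝ)+2) + 1/((m:ℝ)+3) := by
    rw [show m+3 = m+1+1+1 from rfl, harmonic_succ, harmonic_succ]
    push_cast
    ring
  have e1 : m + 3 - 2 = m + 1 := by omega
  simp only [aa, s, e1, hicc, hharm]
  push_cast
  have h2 : ((m:ℝ)+2) ≠ 0 := by positivity
  have h3 : ((m:ℝ)+3) ≠ 0 := by positivity
  rw [show ((m:ℝ)+3-1) = (m:ℝ)+2 from by ring]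
  field_simp
  ring

lemma tendsto_aa : Tendsto aa atTop (𝓝 Real.eulerMascheroniConstant) := by
  have hN : Tendsto (fun n : ℕ => (n:ℝ)) atTop atTop := tendsto_natCast_atTop_atTop
  have t1 : Tendsto (fun n : ℕ => 1/(12*((n:ℝ)-1))) atTop (𝓝 0) := by
    apply tendsto_const_nhds.div_atTop
    apply Filter.Tendsto.const_mul_atTop (show (0:ℝ) < 12 by norm_num)
    simpa [sub_eq_add_neg] using tendsto_atTop_add_const_right atTop (-1:ℝ) hN
  have t2 : Tendsto (fun n : ℕ => 7/(12*(n:ℝ))) atTop (𝓝 0) := by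
    apply tendsto_const_nhds.div_atTop
    exact Filter.Tendsto.const_mul_atTop (show (0:ℝ) < 12 by norm_num) hN
  have t3 : Tendsto (fun n : ℕ => 1/(12*(n:ℝ)^3)) atTop (𝓝 0) := by
    apply tendsto_const_nhds.div_atTop
    apply Filter.Tendsto.const_mul_atTop (show (0:ℝ) < 12 by norm_num)
    exact (tendsto_pow_atTop (by norm_num)).comp hN
  have t4 : Tendsto (fun n : ℕ => 11/(120*(n:ℝ)^4)) atTop (𝓝 0) := by
    apply tendsto_const_nhds.div_atTop
    apply Filter.Tendsto.const_mul_atTop (show (0:ℝ) < 120 by norm_num)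
    exact (tendsto_pow_atTop (by norm_num)).comp hN
  have htail := (t1.sub t2).sub (t3.add t4)
  rw [show (0:ℝ) - 0 - (0+0) = 0 by norm_num] at htail
  have hlim := Real.tendsto_harmonic_sub_log.add htail
  rw [add_zero] at hlim
  apply hlim.congr'
  filter_upwards [eventually_ge_atTop 3] with n hn
  exact (aa_eq n hn).symm

lemma gamma_le_aa (n : ℕ) (hn : 3 ≤ n) : Real.eulerMascheroniConstant ≤ aa n := by
  apply le_of_tendsto tendsto_aa
  filter_upwards [eventually_ge_atTop n] with m hm
  induction m, hm using Nat.le_induction with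
  | base => exact le_refl _
  | succ m hm ih => exact (step m (hn.trans hm)).le.trans ih

theorem lower_bound (n : ℕ) (hn : 3 ≤ n) :
    1 / (12 * (n : ℝ) ^ 3) + 11 / (120 * (n : ℝ) ^ 4)
      < s n - Real.eulerMascheroniConstant := by
  have h1 := gamma_le_aa (n+1) (by omega)
  have h2 := step n hn
  have h3 : Real.eulerMascheroniConstant < aa n := lt_of_le_of_lt h1 h2
  simp only [aa] at h3
  linarith
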